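/- The class of languages recognized by counting automata over P(Σ) is closed under concatenation: given such automata recognizing L_A and L_B, there exists a counting automaton over P(Σ) recognizing L_A·L_B. -/

import Mathlib

/-- Concatenation of languages. -/
def conc {σ : Type*} (L M : Set (List σ)) : Set (List σ) :=
  {w | ∃ u ∈ L, ∃ v ∈ M, w = u ++ v}

/-- The language of one-letter words with letters from `S ⊆ Σ`. -/
def letters {σ : Type*} (S : Set σ) : Set (List σ) := {w | ∃ x ∈ S, w = [x]}

/-- A counting automaton over `P(Σ)`: states `f₁,…,f_k` (`k ≥ 1`), the first state
being the initial state, transition weight languages `L_{ij} ⊆ Σ`, and final weights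
`{ε}` (final states) or `∅` (non-final states). -/
structure CA (σ : Type*) where
  k : ℕ
  pos : 0 < k
  L : Fin k → Fin k → Set σ
  final : Fin k → Bool

/-- The behavior of each state: `f_i(0)` is the final weight and
`f_i(n+1) = ⋃_j L_{ij}·f_j(n)`. -/
def CA.f {σ : Type*} (A : CA σ) : ℕ → Fin A.k → Set (List σ)
  | 0, i => if A.final i then {([] : List σ)} else ∅
  | n + 1, i => ⋃ j, conc (letters (A.L i j)) (A.f n j)

/-- The language recognized by a counting automaton over `P(Σ)`: `⋃_n f₁(n)`. -/
def CA.lang {σ : Type*} (A : CA σ) : Set (List σ) := ⋃ n, A.f n ⟨0, A.pos⟩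



section Aux

variable {σ : Type*}

lemma mem_conc {L M : Set (List σ)} {w : List σ} :
    w ∈ conc L M ↔ ∃ u ∈ L, ∃ v ∈ M, w = u ++ v := Iff.rfl

lemma mem_conc_letters {S : Set σ} {T : Set (List σ)} {w : List σ} :
    w ∈ conc (letters S) T ↔ ∃ x ∈ S, ∃ v ∈ T, w = x :: v := by
  constructor
  · rintro ⟨u, ⟨x, hx, rfl⟩, v, hv, rfl⟩; exact ⟨x, hx, v, hv, rfl⟩
  · rintro ⟨x, hx, v, hv, rfl⟩; exact ⟨[x], ⟨x, hx, rfl⟩, v, hv, rfl⟩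

lemma conc_letters_empty (T : Set (List σ)) : conc (letters (∅ : Set σ)) T = ∅ := by
  ext w; simp [mem_conc_letters]

lemma iUnion_fin_add {a b : ℕ} (g : Fin (a + b) → Set (List σ)) :
    ⋃ j, g j = (⋃ j, g (Fin.castAdd b j)) ∪ ⋃ j, g (Fin.natAdd a j) := by
  rw [← (finSumFinEquiv (m := a) (n := b)).surjective.iUnion_comp g, Set.iUnion_sum]
  simp

lemma mem_f_zero {A : CA σ} {i : Fin A.k} {u : List σ} :
    u ∈ A.f 0 i ↔ A.final i = true ∧ u = [] := by
  by_cases h : A.final i = true <;> simp [CA.f, h]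

lemma f_succ {A : CA σ} {i : Fin A.k} {n : ℕ} :
    A.f (n + 1) i = ⋃ j, conc (letters (A.L i j)) (A.f n j) := rfl

variable (A B : CA σ)

def b0 : Fin B.k := ⟨0, B.pos⟩

def catL : Fin (A.k + B.k) → Fin (A.k + B.k) → Set σ := fun i j =>
  Fin.addCases (motive := fun _ => Set σ)
    (fun i' => Fin.addCases (motive := fun _ => Set σ)
      (fun j' => A.L i' j')
      (fun j' => if A.final i' then B.L (b0 B) j' else ∅) j)
    (fun i' => Fin.addCases (motive := fun _ => Set σ)
      (fun _ => (∅ : Set σ)) (fun j' => B.L i' j') j) i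

def catCA : CA σ where
  k := A.k + B.k
  pos := Nat.add_pos_left A.pos _
  L := catL A B
  final := fun i => Fin.addCases (motive := fun _ => Bool)
    (fun i' => A.final i' && B.final (b0 B)) (fun i' => B.final i') i

@[simp] lemma catL_ll (i j : Fin A.k) :
    catL A B (Fin.castAdd B.k i) (Fin.castAdd B.k j) = A.L i j := by
  simp [catL]

@[simp] lemma catL_lr (i : Fin A.k) (j : Fin B.k) :
    catL A B (Fin.castAdd B.k i) (Fin.natAdd A.k j)
      = if A.final i then B.L (b0 B) j else ∅ := by
  simp [catL]

@[simp] lemma catL_rl (i : Fin B.k) (j : Fin A.k) :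
    catL A B (Fin.natAdd A.k i) (Fin.castAdd B.k j) = ∅ := by
  simp [catL]

@[simp] lemma catL_rr (i j : Fin B.k) :
    catL A B (Fin.natAdd A.k i) (Fin.natAdd A.k j) = B.L i j := by
  simp [catL]

@[simp] lemma catCA_final_l (i : Fin A.k) :
    (catCA A B).final (Fin.castAdd B.k i) = (A.final i && B.final (b0 B)) := by
  simp [catCA]

@[simp] lemma catCA_final_r (i : Fin B.k) :
    (catCA A B).final (Fin.natAdd A.k i) = B.final i := by
  simp [catCA]

lemma f_right : ∀ (N : ℕ) (j : Fin B.k),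
    (catCA A B).f N (Fin.natAdd A.k j) = B.f N j := by
  intro N
  induction N with
  | zero =>
    intro j; ext u; rw [mem_f_zero (A := catCA A B) (i := Fin.natAdd A.k j)]; simp [mem_f_zero]
  | succ n ih =>
    intro j
    show (⋃ j' : Fin (A.k + B.k), conc (letters (catL A B (Fin.natAdd A.k j) j')) ((catCA A B).f n j')) = _
    rw [iUnion_fin_add (fun j' => conc (letters (catL A B (Fin.natAdd A.k j) j')) ((catCA A B).f n j'))]
    simp only [catL_rl, catL_rr, conc_letters_empty, Set.iUnion_empty, Set.empty_union, ih]
    rfl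

lemma f_left : ∀ (N : ℕ) (i : Fin A.k),
    (catCA A B).f N (Fin.castAdd B.k i)
      = ⋃ (p : ℕ × ℕ) (_ : p.1 + p.2 = N), conc (A.f p.1 i) (B.f p.2 (b0 B)) := by
  intro N
  induction N with
  | zero =>
    intro i
    ext w
    simp only [Set.mem_iUnion]
    constructor
    · intro hw
      replace hw := (mem_f_zero (A := catCA A B) (i := Fin.castAdd B.k i)).mp hw
      obtain ⟨hf, rfl⟩ := hw
      rw [catCA_final_l] at hf
      obtain ⟨h1, h2⟩ := Bool.and_eq_true_iff.mp hf
      exact ⟨(0, 0), rfl, [], mem_f_zero.mpr ⟨h1, rfl⟩, [], mem_f_zero.mpr ⟨h2, rfl⟩, rfl⟩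
    · rintro ⟨⟨m, n⟩, hmn, u, hu, v, hv, rfl⟩
      obtain ⟨hm, hn⟩ := Nat.add_eq_zero.mp hmn
      subst hm; subst hn
      rw [mem_f_zero] at hu hv
      obtain ⟨h1, rfl⟩ := hu; obtain ⟨h2, rfl⟩ := hv
      exact mem_f_zero.mpr ⟨by simp [h1, h2], rfl⟩
  | succ n ih =>
    intro i
    show (⋃ j' : Fin (A.k + B.k), conc (letters (catL A B (Fin.castAdd B.k i) j')) ((catCA A B).f n j'))
      = ⋃ (p : ℕ × ℕ) (_ : p.1 + p.2 = n + 1), conc (A.f p.1 i) (B.f p.2 (b0 B))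
    rw [iUnion_fin_add (fun j' => conc (letters (catL A B (Fin.castAdd B.k i) j')) ((catCA A B).f n j'))]
    ext w
    simp only [catL_ll, catL_lr, f_right, ih, Set.mem_union, Set.mem_iUnion]
    constructor
    · rintro (⟨j, hj⟩ | ⟨j, hj⟩)
      · rw [mem_conc_letters] at hj
        obtain ⟨x, hx, v', hv', rfl⟩ := hj
        simp only [Set.mem_iUnion] at hv'
        obtain ⟨⟨m, n'⟩, hmn, u, hu, v, hv, rfl⟩ := hv'
        refine ⟨(m + 1, n'), by omega, x :: u, ?_, v, hv, by simp⟩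
        rw [f_succ]
        exact Set.mem_iUnion.mpr ⟨j, mem_conc_letters.mpr ⟨x, hx, u, hu, rfl⟩⟩
      · by_cases hf : A.final i = true
        · rw [hf, if_pos rfl] at hj
          rw [mem_conc_letters] at hj
          obtain ⟨x, hx, v, hv, rfl⟩ := hj
          refine ⟨(0, n + 1), by omega, [], mem_f_zero.mpr ⟨hf, rfl⟩, x :: v, ?_, rfl⟩
          rw [f_succ]
          exact Set.mem_iUnion.mpr ⟨j, mem_conc_letters.mpr ⟨x, hx, v, hv, rfl⟩⟩
        · simp [hf, conc_letters_empty] at hj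
    · rintro ⟨⟨m, n'⟩, hmn, u, hu, v, hv, rfl⟩
      match m with
      | 0 =>
        obtain ⟨hf, rfl⟩ := mem_f_zero.mp hu
        have hn' : n' = n + 1 := by omega
        subst hn'
        rw [f_succ] at hv
        obtain ⟨j, hj⟩ := Set.mem_iUnion.mp hv
        obtain ⟨x, hx, v', hv', rfl⟩ := mem_conc_letters.mp hj
        exact Or.inr ⟨j, by
          rw [hf, if_pos rfl]
          exact mem_conc_letters.mpr ⟨x, hx, v', hv', rfl⟩⟩
      | m' + 1 =>
        rw [f_succ] at hu
        obtain ⟨j, hj⟩ := Set.mem_iUnion.mp hu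
        obtain ⟨x, hx, u', hu', rfl⟩ := mem_conc_letters.mp hj
        refine Or.inl ⟨j, mem_conc_letters.mpr ⟨x, hx, u' ++ v, ?_, rfl⟩⟩
        exact Set.mem_iUnion.mpr ⟨(m', n'), Set.mem_iUnion.mpr ⟨by omega, u', hu', v, hv, rfl⟩⟩

lemma catCA_lang : (catCA A B).lang = conc A.lang B.lang := by
  have key : ∀ N, (catCA A B).f N ⟨0, (catCA A B).pos⟩
      = ⋃ (p : ℕ × ℕ) (_ : p.1 + p.2 = N), conc (A.f p.1 ⟨0, A.pos⟩) (B.f p.2 (b0 B)) :=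
    fun N => f_left A B N ⟨0, A.pos⟩
  ext w
  simp only [CA.lang, Set.mem_iUnion, key, mem_conc]
  constructor
  · rintro ⟨N, ⟨m, n⟩, hmn, u, hu, v, hv, rfl⟩
    exact ⟨u, ⟨m, hu⟩, v, ⟨n, hv⟩, rfl⟩
  · rintro ⟨u, ⟨m, hu⟩, v, ⟨n, hv⟩, rfl⟩
    exact ⟨m + n, ⟨m, n⟩, rfl, u, hu, v, hv, rfl⟩

end Aux

/-- The class of languages recognized by counting automata over `P(Σ)` is closed
under concatenation. -/
theorem stmt9 {σ : Type*} [Fintype σ] (L₁ L₂ : Set (List σ))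
    (h₁ : ∃ A : CA σ, A.lang = L₁) (h₂ : ∃ B : CA σ, B.lang = L₂) :
    ∃ C : CA σ, C.lang = conc L₁ L₂ := by
  obtain ⟨A, rfl⟩ := h₁
  obtain ⟨B, rfl⟩ := h₂
  exact ⟨catCA A B, catCA_lang A B⟩
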